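/- Let U(T) = Σₙ e^{-iεₙ(φ)T} |n(φ)⟩⟨n(φ)| be the spectral decomposition of a unitary on ℂᵈ with smooth quasienergies εₙ(φ) and smooth orthonormal eigenprojectors. Then (i/T) U(T)† ∂_φ U(T) = Σₙ (∂_φ εₙ) |n⟩⟨n| + R(T), where the operator norm of R(T) is bounded by C/T for a constant C independent of T. -/

import Mathlib

open Matrix Filter

attribute [local instance] Matrix.normedAddCommGroup Matrix.normedSpace

/-- If `U(T) = Σₙ e^{-iεₙ(φ)T} Pₙ(φ)` is the spectral decomposition of a
unitary on ℂᵈ, with real quasienergies `εₙ` (φ-derivative `ε'ₙ`) and orthonormal Hermitian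
eigenprojectors `Pₙ` (φ-derivative `P'ₙ`), then
`(i/T) U(T)† ∂_φ U(T) = Σₙ (∂_φ εₙ) Pₙ + R(T)` with `‖R(T)‖ ≤ C/T` for `C` independent
of `T`. Here `∂_φ U(T) = Σₙ e^{-iεₙT}(P'ₙ - i ε'ₙ T Pₙ)`. -/
theorem stmt1 (d : ℕ) (ε ε' : Fin d → ℝ) (P P' : Fin d → Matrix (Fin d) (Fin d) ℂ)
    (hherm : ∀ n, (P n).IsHermitian)
    (horth : ∀ n m, P n * P m = if n = m then P n else 0)
    (hcomplete : ∑ n, P n = 1)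
    (U : ℝ → Matrix (Fin d) (Fin d) ℂ)
    (hU : ∀ T : ℝ, U T = ∑ n, Complex.exp (-(ε n : ℂ) * T * Complex.I) • P n)
    (U' : ℝ → Matrix (Fin d) (Fin d) ℂ)
    (hU' : ∀ T : ℝ, U' T = ∑ n, Complex.exp (-(ε n : ℂ) * T * Complex.I) •
      (P' n - ((ε' n : ℂ) * T * Complex.I) • P n)) :
    ∃ C : ℝ, ∀ T : ℝ, 0 < T →
      ‖(Complex.I / (T : ℂ)) • ((U T)ᴴ * U' T) - ∑ n, ((ε' n : ℂ)) • P n‖ ≤ C / T := by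
  refine ⟨∑ m, ∑ n, ‖P m * P' n‖, fun T hT => ?_⟩
  have hT0 : (T : ℂ) ≠ 0 := by exact_mod_cast hT.ne'
  set a : Fin d → ℂ := fun n => Complex.exp (-(ε n : ℂ) * T * Complex.I) with ha
  have hconj : ∀ m, starRingEnd ℂ (a m) = Complex.exp ((ε m : ℂ) * T * Complex.I) := by
    intro m
    rw [ha]
    rw [← Complex.exp_conj]
    congr 1
    simp only [_root_.map_mul, map_neg, Complex.conj_ofReal, Complex.conj_I]
    ring
  have hUc : (U T)ᴴ = ∑ m, (starRingEnd ℂ (a m)) • P m := by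
    rw [hU, conjTranspose_sum]
    refine Finset.sum_congr rfl fun x _ => ?_
    rw [conjTranspose_smul, (hherm x).eq, ha]
    rfl
  have hunit : ∀ m, ‖a m‖ = 1 := by
    intro m
    rw [ha]
    simp [Complex.norm_exp]
  have hprod : ∀ n, starRingEnd ℂ (a n) * a n = 1 := by
    intro n
    rw [hconj, ha, ← Complex.exp_add]
    ring_nf
    exact Complex.exp_zero
  have key : (Complex.I / (T : ℂ)) • ((U T)ᴴ * U' T) - ∑ n, ((ε' n : ℂ)) • P n
      = (Complex.I / (T : ℂ)) • ∑ m, ∑ n,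
          (starRingEnd ℂ (a m) * a n) • (P m * P' n) := by
    rw [hUc, hU' T, Finset.sum_mul_sum]
    have expand : ∀ m n, (starRingEnd ℂ (a m) • P m) *
        (a n • (P' n - ((ε' n : ℂ) * T * Complex.I) • P n))
        = (starRingEnd ℂ (a m) * a n) • (P m * P' n)
          - (starRingEnd ℂ (a m) * a n * ((ε' n : ℂ) * T * Complex.I)) •
            (if m = n then P m else 0) := by
      intro m n
      rw [← horth]
      simp only [Matrix.mul_sub, Matrix.smul_mul, Matrix.mul_smul, smul_sub, smul_smul]
      ring_nf
    simp only [show ∀ j, Complex.exp (-(ε j : ℂ) * T * Complex.I) = a j from fun j => rfl]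
    simp only [expand, Finset.sum_sub_distrib]
    have h2 : ∀ x : Fin d, (∑ y, (starRingEnd ℂ (a x) * a y * ((ε' y : ℂ) * T * Complex.I)) •
        (if x = y then P x else 0)) = ((ε' x : ℂ) * T * Complex.I) • P x := by
      intro x
      rw [Finset.sum_eq_single x]
      · rw [if_pos rfl, hprod, one_mul]
      · intro y _ hy
        rw [if_neg (fun h => hy h.symm), smul_zero]
      · intro h
        exact absurd (Finset.mem_univ x) h
    simp only [h2]
    rw [smul_sub]
    have h3 : (Complex.I / (T : ℂ)) • ∑ x, (((ε' x : ℂ)) * T * Complex.I) • P x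
        = -∑ x, ((ε' x : ℂ)) • P x := by
      rw [Finset.smul_sum, ← Finset.sum_neg_distrib]
      refine Finset.sum_congr rfl fun x _ => ?_
      rw [smul_smul, ← neg_smul]
      congr 1
      field_simp
      ring_nf
      simp [Complex.I_sq]
    rw [h3]
    abel
  rw [key]
  have hS : ‖∑ m, ∑ n, (starRingEnd ℂ (a m) * a n) • (P m * P' n)‖
      ≤ ∑ m, ∑ n, ‖P m * P' n‖ := by
    refine (norm_sum_le _ _).trans (Finset.sum_le_sum fun m _ => ?_)
    refine (norm_sum_le _ _).trans (Finset.sum_le_sum fun n _ => ?_)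
    rw [norm_smul]
    have h1 : ‖starRingEnd ℂ (a m) * a n‖ = 1 := by
      simp [_root_.map_mul, hunit]
    rw [h1, one_mul]
  have hnorm : ‖Complex.I / (T : ℂ)‖ = 1 / T := by
    rw [norm_div]
    simp [abs_of_pos hT]
  rw [norm_smul, hnorm]
  calc (1 / T) * ‖∑ m, ∑ n, (starRingEnd ℂ (a m) * a n) • (P m * P' n)‖
      ≤ (1 / T) * ∑ m, ∑ n, ‖P m * P' n‖ := by
        apply mul_le_mul_of_nonneg_left hS
        positivity
    _ = (∑ m, ∑ n, ‖P m * P' n‖) / T := by ring
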